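/- Fix $p \in (0, 1/2)$ and define $e(p) = \exp(1)$ if $p < \frac{3-\sqrt5}{2}$, and $e(p) = \exp\big(\frac{p^2 + \sqrt{p(p-1)(p^2-3p+1)}}{p(1-2p)}\big)$ if $\frac{3-\sqrt5}{2} \le p < \frac12$. Then the function $r(x) = x^{\frac{1}{2(1-p)}} (\log x)^{\frac{p}{1-p}}$ is concave on $[e(p)^{2p}, \infty)$. -/

import Mathlib

open Real Set

set_option maxHeartbeats 1000000 in
theorem stmt_9 (p : ℝ) (hp0 : 0 < p) (hp : p < 1 / 2)
    (ep : ℝ)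
    (hep : ep = if p < (3 - Real.sqrt 5) / 2 then Real.exp 1
      else Real.exp ((p ^ 2 + Real.sqrt (p * (p - 1) * (p ^ 2 - 3 * p + 1))) / (p * (1 - 2 * p)))) :
    ConcaveOn ℝ (Set.Ici (ep ^ (2 * p)))
      (fun x => x ^ (1 / (2 * (1 - p))) * (Real.log x) ^ (p / (1 - p))) := by
  have h1p : (0:ℝ) < 1 - p := by linarith
  have h12p : (0:ℝ) < 1 - 2*p := by linarith
  set A : ℝ := 1 / (2 * (1 - p)) with hA
  set B : ℝ := p / (1 - p) with hB
  have hept : ∃ t : ℝ, 0 < t ∧ ep = Real.exp t := by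
    rw [hep]
    split_ifs with h
    · exact ⟨1, one_pos, rfl⟩
    · refine ⟨_, ?_, rfl⟩
      apply div_pos
      · have := Real.sqrt_nonneg (p * (p - 1) * (p ^ 2 - 3 * p + 1))
        nlinarith
      · exact mul_pos hp0 h12p
  obtain ⟨t, ht0, het⟩ := hept
  have hc : ep ^ (2*p) = Real.exp (t * (2*p)) := by
    rw [het, Real.rpow_def_of_pos (Real.exp_pos t), Real.log_exp]
  have hc1 : 1 < ep ^ (2*p) := by
    rw [hc]
    have h' : (0:ℝ) < t * (2*p) := by positivity
    calc (1:ℝ) = Real.exp 0 := Real.exp_zero.symm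
      _ < _ := Real.exp_lt_exp.mpr h'
  have key1 : ∀ x : ℝ, 1 < x → HasDerivAt (fun y => y ^ A * Real.log y ^ B)
      (A * (x ^ (A-1) * Real.log x ^ B) + B * (x ^ (A-1) * Real.log x ^ (B-1))) x := by
    intro x hx
    have hx0 : (0:ℝ) < x := by linarith
    have hL : 0 < Real.log x := Real.log_pos hx
    have h1 : HasDerivAt (fun y : ℝ => y ^ A) (A * x ^ (A-1)) x :=
      Real.hasDerivAt_rpow_const (Or.inl hx0.ne')
    have h2 : HasDerivAt (fun y : ℝ => Real.log y ^ B) (B * Real.log x ^ (B-1) * x⁻¹) x :=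
      (Real.hasDerivAt_rpow_const (p := B) (Or.inl hL.ne')).comp x (Real.hasDerivAt_log hx0.ne')
    have h3 := h1.mul h2
    refine h3.congr_deriv ?_
    have e1 : x ^ (A-1) = x ^ A * x⁻¹ := by
      rw [Real.rpow_sub hx0, Real.rpow_one, div_eq_mul_inv]
    rw [e1]; ring
  have key2 : ∀ x : ℝ, 1 < x →
      HasDerivAt (fun y => A * (y ^ (A-1) * Real.log y ^ B) + B * (y ^ (A-1) * Real.log y ^ (B-1)))
      ((x ^ (A-2) * Real.log x ^ (B-2)) *
        (((2*p-1)*(Real.log x * Real.log x) + 4*p^2*Real.log x + 4*p*(2*p-1)) / (4*(1-p)^2))) x := by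
    intro x hx
    have hx0 : (0:ℝ) < x := by linarith
    have hxne : x ≠ 0 := hx0.ne'
    have hL : 0 < Real.log x := Real.log_pos hx
    have h3 : HasDerivAt (fun y : ℝ => y ^ (A-1)) ((A-1) * x ^ (A-2)) x := by
      have h := Real.hasDerivAt_rpow_const (p := A-1) (Or.inl hx0.ne')
      rwa [show A-1-1 = A-2 by ring] at h
    have h2 : HasDerivAt (fun y : ℝ => Real.log y ^ B) (B * Real.log x ^ (B-1) * x⁻¹) x :=
      (Real.hasDerivAt_rpow_const (p := B) (Or.inl hL.ne')).comp x (Real.hasDerivAt_log hx0.ne')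
    have h2' : HasDerivAt (fun y : ℝ => Real.log y ^ (B-1)) ((B-1) * Real.log x ^ (B-2) * x⁻¹) x := by
      have h := (Real.hasDerivAt_rpow_const (p := B-1) (Or.inl hL.ne')).comp x
        (Real.hasDerivAt_log hx0.ne')
      rwa [show B-1-1 = B-2 by ring] at h
    have hAt := ((h3.mul h2).const_mul A).add ((h3.mul h2').const_mul B)
    refine hAt.congr_deriv ?_
    have e1 : x ^ (A-2) = x ^ (A-1) * x⁻¹ := by
      rw [show A-2 = (A-1)-1 by ring, Real.rpow_sub hx0, Real.rpow_one, div_eq_mul_inv]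
    have e2 : Real.log x ^ B = Real.log x ^ (B-2) * (Real.log x * Real.log x) := by
      have h' : Real.log x ^ (B-2) * Real.log x ^ (2:ℝ) = Real.log x ^ B := by
        rw [← Real.rpow_add hL]; congr 1; ring
      rw [← h', show (2:ℝ) = ((2:ℕ):ℝ) by norm_num, Real.rpow_natCast]; ring
    have e3 : Real.log x ^ (B-1) = Real.log x ^ (B-2) * Real.log x := by
      have h' : Real.log x ^ (B-2) * Real.log x ^ (1:ℝ) = Real.log x ^ (B-1) := by
        rw [← Real.rpow_add hL]; congr 1; ring
      rw [← h', Real.rpow_one]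
    rw [e1, e2, e3]
    set X := x ^ (A-1) with hX
    set Y := Real.log x ^ (B-2) with hY
    set L := Real.log x with hLd
    rw [hA, hB]
    have h1pne : (1:ℝ) - p ≠ 0 := h1p.ne'
    field_simp
    ring
  have hQ : ∀ x : ℝ, ep ^ (2*p) < x →
      (x ^ (A-2) * Real.log x ^ (B-2)) *
        (((2*p-1)*(Real.log x * Real.log x) + 4*p^2*Real.log x + 4*p*(2*p-1)) / (4*(1-p)^2)) ≤ 0 := by
    intro x hx
    have hx1 : 1 < x := lt_trans hc1 hx
    have hx0 : (0:ℝ) < x := by linarith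
    have hL : 0 < Real.log x := Real.log_pos hx1
    have hLt : t * (2*p) < Real.log x := by
      have h' := Real.log_lt_log (by positivity) hx
      rwa [hc, Real.log_exp] at h'
    have hQneg : (2*p-1)*(Real.log x * Real.log x) + 4*p^2*Real.log x + 4*p*(2*p-1) ≤ 0 := by
      have h5 : Real.sqrt 5 ^ 2 = 5 := Real.sq_sqrt (by norm_num)
      have h5n : 0 ≤ Real.sqrt 5 := Real.sqrt_nonneg 5
      by_cases hcase : p < (3 - Real.sqrt 5) / 2
      · have hq : 0 < p^2 - 3*p + 1 := by nlinarith
        have hd : p^4 - p*(2*p-1)^2 < 0 := by nlinarith [mul_pos (mul_pos hp0 hq) h1p]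
        nlinarith [sq_nonneg ((1-2*p)*Real.log x - 2*p^2), mul_pos h12p h12p]
      · push_neg at hcase
        have hq : p^2 - 3*p + 1 ≤ 0 := by nlinarith
        have hrad : 0 ≤ p * (p - 1) * (p ^ 2 - 3 * p + 1) := by nlinarith
        set s : ℝ := Real.sqrt (p * (p - 1) * (p ^ 2 - 3 * p + 1)) with hs
        have hs2 : s^2 = p * (p - 1) * (p ^ 2 - 3 * p + 1) := Real.sq_sqrt hrad
        have hs0 : 0 ≤ s := Real.sqrt_nonneg _
        have hept2 : ep = Real.exp ((p ^ 2 + s) / (p * (1 - 2 * p))) := by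
          rw [hep, if_neg (not_lt.mpr hcase)]
        have htval : t = (p ^ 2 + s) / (p * (1 - 2 * p)) :=
          Real.exp_injective (het.symm.trans hept2)
        have hL2 : 2*p^2 + 2*s < (1-2*p) * Real.log x := by
          have h' : t * (2*p) = (2*p^2 + 2*s) / (1-2*p) := by
            rw [htval]; field_simp
          rw [h'] at hLt
          have := (div_lt_iff₀ h12p).mp hLt
          linarith
        have hA1 : 0 ≤ (1-2*p)*Real.log x - 2*p^2 - 2*s := by linarith
        have hA2 : 0 ≤ (1-2*p)*Real.log x - 2*p^2 + 2*s := by linarith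
        nlinarith [mul_nonneg hA1 hA2, mul_pos h12p h12p]
    have hpow1 : 0 < x ^ (A-2) := Real.rpow_pos_of_pos hx0 _
    have hpow2 : 0 < Real.log x ^ (B-2) := Real.rpow_pos_of_pos hL _
    apply mul_nonpos_of_nonneg_of_nonpos
    · positivity
    · apply div_nonpos_of_nonpos_of_nonneg hQneg
      positivity
  apply concaveOn_of_hasDerivWithinAt2_nonpos (convex_Ici _)
    (f' := fun x => A * (x ^ (A-1) * Real.log x ^ B) + B * (x ^ (A-1) * Real.log x ^ (B-1)))
    (f'' := fun x => (x ^ (A-2) * Real.log x ^ (B-2)) *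
      (((2*p-1)*(Real.log x * Real.log x) + 4*p^2*Real.log x + 4*p*(2*p-1)) / (4*(1-p)^2)))
  · intro x hx
    exact (key1 x (lt_of_lt_of_le hc1 hx)).continuousAt.continuousWithinAt
  · intro x hx
    rw [interior_Ici] at hx
    exact (key1 x (lt_trans hc1 hx)).hasDerivWithinAt
  · intro x hx
    rw [interior_Ici] at hx
    exact (key2 x (lt_trans hc1 hx)).hasDerivWithinAt
  · intro x hx
    rw [interior_Ici] at hx
    exact hQ x hx
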